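/- Let σ be a relational vocabulary, 𝒜 and ℬ σ-structures, and k ≥ 1. If f : E_k 𝒜 → ℬ and g : E_k ℬ → 𝒜 are homomorphisms which are both I-morphisms, and s ∈ A^{≤k}, t ∈ B^{≤k} satisfy f*(s) = t and g*(t) = s, then, writing s = [a_1,…,a_n] and t = [b_1,…,b_n], the relation {(a_i, b_i) : 1 ≤ i ≤ n} is a partial isomorphism from 𝒜 to ℬ. -/

import Mathlib

/-- A relational vocabulary: a type of relation symbols with arities. -/
structure RelVocab : Type 1 where
  Rel : Type
  ar : Rel → ℕ

/-- A structure for a relational vocabulary. -/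
structure RelStruct (σ : RelVocab) : Type 1 where
  carrier : Type
  rel : ∀ R : σ.Rel, (Fin (σ.ar R) → carrier) → Prop

/-- Homomorphisms of relational structures. -/
def IsHom {σ : RelVocab} (𝒜 ℬ : RelStruct σ) (h : 𝒜.carrier → ℬ.carrier) : Prop :=
  ∀ (R : σ.Rel) (v : Fin (σ.ar R) → 𝒜.carrier), 𝒜.rel R v → ℬ.rel R (fun i => h (v i))

/-- Nonempty sequences over `A` of length at most `k`: the universe of `E_k 𝒜`. -/
def EkC (k : ℕ) (A : Type) : Type :=
  {l : List A // l ≠ [] ∧ l.length ≤ k}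

/-- The counit: the last element of a sequence. -/
def eps {k : ℕ} {A : Type} (s : EkC k A) : A :=
  s.1.getLast s.2.1

/-- Comparability in the prefix order. -/
def Cmp {A : Type} (s t : List A) : Prop :=
  s <+: t ∨ t <+: s

/-- The Ehrenfeucht–Fraïssé comonad `E_k` on structures. -/
def Ek {σ : RelVocab} (k : ℕ) (𝒜 : RelStruct σ) : RelStruct σ where
  carrier := EkC k 𝒜.carrier
  rel R v := (∀ i j, Cmp (v i).1 (v j).1) ∧ 𝒜.rel R (fun i => eps (v i))

/-- The prefix of `s` of length `i+1`. -/
def prefAt {k : ℕ} {A : Type} (s : EkC k A) (i : Fin s.1.length) : EkC k A :=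
  ⟨s.1.take (i + 1), by
    constructor
    · apply List.ne_nil_of_length_pos
      rw [List.length_take]
      exact lt_min (Nat.succ_pos _) (Nat.lt_of_le_of_lt (Nat.zero_le _) i.2)
    · rw [List.length_take]
      exact le_trans (min_le_right _ _) s.2.2⟩

/-- The Kleisli coextension `f* [a_1,…,a_j] = [f[a_1],…,f[a_1,…,a_j]]`. -/
def coext {k : ℕ} {A B : Type} (f : EkC k A → B) (s : EkC k A) : EkC k B :=
  ⟨List.ofFn (fun i : Fin s.1.length => f (prefAt s i)), by
    constructor
    · apply List.ne_nil_of_length_pos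
      rw [List.length_ofFn]
      exact List.length_pos_iff.mpr s.2.1
    · rw [List.length_ofFn]
      exact s.2.2⟩

/-- A partial homomorphism from `𝒜` to `ℬ`: a finite relation, single-valued on its
domain, preserving all relations where defined. -/
def IsPHom {σ : RelVocab} (𝒜 ℬ : RelStruct σ) (r : Set (𝒜.carrier × ℬ.carrier)) : Prop :=
  r.Finite ∧
  (∀ a b b', (a, b) ∈ r → (a, b') ∈ r → b = b') ∧
  (∀ (R : σ.Rel) (v : Fin (σ.ar R) → 𝒜.carrier) (w : Fin (σ.ar R) → ℬ.carrier),
    (∀ i, (v i, w i) ∈ r) → 𝒜.rel R v → ℬ.rel R w)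

/-- The converse of a relation. -/
def conv {A B : Type} (r : Set (A × B)) : Set (B × A) :=
  {q | (q.2, q.1) ∈ r}

/-- A partial isomorphism: a partial homomorphism whose converse is a partial
homomorphism. -/
def IsPIso {σ : RelVocab} (𝒜 ℬ : RelStruct σ) (r : Set (𝒜.carrier × ℬ.carrier)) : Prop :=
  IsPHom 𝒜 ℬ r ∧ IsPHom ℬ 𝒜 (conv r)

/-- The I-morphism condition for a coKleisli morphism `E_k 𝒜 → ℬ`. -/
def IMor {k : ℕ} {A B : Type} (f : EkC k A → B) : Prop :=
  ∀ s t : EkC k A, s.1 <+: t.1 → eps s = eps t → f s = f t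


lemma eps_prefAt {k : ℕ} {A : Type} (s : EkC k A) (i : Fin s.1.length) :
    eps (prefAt s i) = s.1[i.1] := by
  show (s.1.take (i.1 + 1)).getLast _ = _
  have hlen : (s.1.take (i.1 + 1)).length = i.1 + 1 := by
    rw [List.length_take]
    exact Nat.min_eq_left i.2
  erw [List.getLast_eq_getElem, List.getElem_take]
  congr 1
  omega

lemma prefAt_prefix {k : ℕ} {A : Type} (s : EkC k A) (i j : Fin s.1.length)
    (hij : i.1 ≤ j.1) : (prefAt s i).1 <+: (prefAt s j).1 := by
  show s.1.take (i.1 + 1) <+: s.1.take (j.1 + 1)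
  rw [List.prefix_take_iff]
  refine ⟨List.take_prefix _ _, ?_⟩
  rw [List.length_take]
  omega

lemma phom_of_coext {σ : RelVocab} (𝒜 ℬ : RelStruct σ) (k : ℕ)
    (f : EkC k 𝒜.carrier → ℬ.carrier) (hf : IsHom (Ek k 𝒜) ℬ f) (hfI : IMor f)
    (s : EkC k 𝒜.carrier) (t : EkC k ℬ.carrier) (hst : coext f s = t) :
    IsPHom 𝒜 ℬ {p | p ∈ s.1.zip t.1} := by
  have ht1 : t.1 = List.ofFn (fun i : Fin s.1.length => f (prefAt s i)) := by
    rw [← hst]; rfl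
  have hlen : t.1.length = s.1.length := by rw [ht1, List.length_ofFn]
  have hziplen : (s.1.zip t.1).length = s.1.length := by
    rw [List.length_zip, hlen, Nat.min_self]
  have htv : ∀ (i : ℕ) (h : i < s.1.length) (h' : i < t.1.length),
      t.1[i] = f (prefAt s ⟨i, h⟩) := by
    intro i h h'
    have := List.getElem_of_eq ht1 h'
    rw [this, List.getElem_ofFn]
  have key : ∀ (i j : ℕ) (hi : i < s.1.length) (hj : j < s.1.length), i ≤ j →
      s.1[i] = s.1[j] → f (prefAt s ⟨i, hi⟩) = f (prefAt s ⟨j, hj⟩) := by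
    intro i j hi hj hij heq
    apply hfI
    · exact prefAt_prefix s ⟨i, hi⟩ ⟨j, hj⟩ hij
    · rw [eps_prefAt s ⟨i, hi⟩, eps_prefAt s ⟨j, hj⟩]
      exact heq
  refine ⟨List.finite_toSet _, ?_, ?_⟩
  · intro a b b' hb hb'
    obtain ⟨i, hi, hieq⟩ := List.mem_iff_getElem.1 hb
    obtain ⟨j, hj, hjeq⟩ := List.mem_iff_getElem.1 hb'
    rw [List.getElem_zip] at hieq hjeq
    have hi' : i < s.1.length := by rw [hziplen] at hi; exact hi
    have hj' : j < s.1.length := by rw [hziplen] at hj; exact hj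
    injection hieq with hia hib
    injection hjeq with hja hjb
    have hit : t.1[i] = f (prefAt s ⟨i, hi'⟩) := htv i hi' (by omega)
    have hjt : t.1[j] = f (prefAt s ⟨j, hj'⟩) := htv j hj' (by omega)
    rcases le_total i j with hle | hle
    · rw [← hib, ← hjb, hit, hjt]
      exact key i j hi' hj' hle (by rw [hia, hja])
    · rw [← hib, ← hjb, hit, hjt]
      exact (key j i hj' hi' hle (by rw [hia, hja])).symm
  · intro R v w hvw hR
    have hmem := fun i => List.mem_iff_getElem.1 (hvw i)
    choose m hm hval using hmem
    have hm' : ∀ i, m i < s.1.length := fun i => by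
      have := hm i; rw [hziplen] at this; exact this
    have hmt : ∀ i, m i < t.1.length := fun i => by rw [hlen]; exact hm' i
    have hv : ∀ i, v i = s.1[m i]'(hm' i) := by
      intro i
      have := hval i; rw [List.getElem_zip] at this
      injection this with h1 h2
      exact h1.symm
    have hw : ∀ i, w i = t.1[m i]'(hmt i) := by
      intro i
      have := hval i; rw [List.getElem_zip] at this
      injection this with h1 h2
      exact h2.symm
    have hrel : (Ek k 𝒜).rel R (fun i => prefAt s ⟨m i, hm' i⟩) := by
      refine ⟨?_, ?_⟩
      · intro i j
        rcases le_total (m i) (m j) with hle | hle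
        · exact Or.inl (prefAt_prefix s ⟨m i, hm' i⟩ ⟨m j, hm' j⟩ hle)
        · exact Or.inr (prefAt_prefix s ⟨m j, hm' j⟩ ⟨m i, hm' i⟩ hle)
      · have : (fun i => eps (prefAt s ⟨m i, hm' i⟩)) = v := by
          funext i
          rw [eps_prefAt s ⟨m i, hm' i⟩]
          exact (hv i).symm
        rw [this]; exact hR
    have := hf R _ hrel
    have hwf : w = fun i => f (prefAt s ⟨m i, hm' i⟩) := by
      funext i
      rw [hw i]
      exact htv (m i) (hm' i) (hmt i)
    rw [hwf]
    exact this

lemma mem_zip_swap {A B : Type} {l : List A} {l' : List B} {a : A} {b : B} :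
    (a, b) ∈ l.zip l' ↔ (b, a) ∈ l'.zip l := by
  rw [← List.zip_swap l l', List.mem_map]
  constructor
  · intro h; exact ⟨(a, b), h, rfl⟩
  · rintro ⟨⟨x, y⟩, hxy, hsw⟩
    have hx : x = a := congrArg Prod.snd hsw
    have hy : y = b := congrArg Prod.fst hsw
    rwa [hx, hy] at hxy

/-- If `f : E_k 𝒜 → ℬ` and `g : E_k ℬ → 𝒜` are I-morphisms and `f*(s) = t`, `g*(t) = s`,
then `(s,t)` defines a partial isomorphism from `𝒜` to `ℬ`. -/
theorem stmt6 (σ : RelVocab) (𝒜 ℬ : RelStruct σ) (k : ℕ) (hk : 1 ≤ k)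
    (f : EkC k 𝒜.carrier → ℬ.carrier) (g : EkC k ℬ.carrier → 𝒜.carrier)
    (hf : IsHom (Ek k 𝒜) ℬ f) (hg : IsHom (Ek k ℬ) 𝒜 g)
    (hfI : IMor f) (hgI : IMor g)
    (s : EkC k 𝒜.carrier) (t : EkC k ℬ.carrier)
    (hst : coext f s = t) (hts : coext g t = s) :
    IsPIso 𝒜 ℬ {p | p ∈ s.1.zip t.1} := by
  constructor
  · exact phom_of_coext 𝒜 ℬ k f hf hfI s t hst
  · have h2 := phom_of_coext ℬ 𝒜 k g hg hgI t s hts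
    have hconv : conv {p | p ∈ s.1.zip t.1} = {p | p ∈ t.1.zip s.1} := by
      ext ⟨b, a⟩
      exact mem_zip_swap
    rw [hconv]
    exact h2
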